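/- Suppose f : ℝⁿ → ℝ ∪ {+∞} is a proper lower semicontinuous function that is quadratically minorised and prox-regular at x̄ for z̄ ∈ ∂f(x̄) with respect to ε and r, and that z̄ ∈ rel-int ∂f(x̄). Then for every β ≥ 0 there exist ε′ > 0 (independent of β) and ε_β > 0 (depending on β) such that f(x̄+u+v) ≥ f(x̄) + ⟨z̄, u+v⟩ + (β/2)‖v‖² − (r/2)‖u‖² whenever v ∈ B_{ε_β}(0) ∩ V and u ∈ B_{ε′}(0) ∩ U. Moreover U² := b¹(∂̲²f(x̄,z̄)) ⊆ U = {h : −δ*_{∂f(x̄)}(−h) = δ*_{∂f(x̄)}(h) = ⟨z̄, h⟩}. -/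

import Mathlib

open Filter Topology Metric Set
open scoped RealInnerProductSpace

noncomputable section

namespace Paper

attribute [local instance] Classical.propDecidable

/-- Ambient Euclidean space `ℝⁿ`. -/
abbrev E (n : ℕ) := EuclideanSpace ℝ (Fin n)

variable {n : ℕ}

/-- A proper extended-real-valued function: never `-∞` and finite somewhere. -/
def ProperFn (f : E n → EReal) : Prop :=
  (∀ x, f x ≠ ⊥) ∧ ∃ x, f x ≠ ⊤

/-- The proximal subdifferential `∂_p f(x)`. -/
def proxSubdiff (f : E n → EReal) (x : E n) : Set (E n) :=
  {z | ∃ r : ℝ, 0 ≤ r ∧ ∃ δ : ℝ, 0 < δ ∧ ∀ x' : E n, ‖x' - x‖ < δ →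
      f x + ((⟪z, x' - x⟫ - r / 2 * ‖x' - x‖ ^ 2 : ℝ) : EReal) ≤ f x'}

/-- The limiting (Mordukhovich) subdifferential `∂ f(x)`. -/
def limSubdiff (f : E n → EReal) (x : E n) : Set (E n) :=
  {z | ∃ xk zk : ℕ → E n,
      (∀ k, zk k ∈ proxSubdiff f (xk k)) ∧
      Tendsto xk atTop (𝓝 x) ∧
      Tendsto (fun k => f (xk k)) atTop (𝓝 (f x)) ∧
      Tendsto zk atTop (𝓝 z)}

/-- The singular limiting subdifferential `∂^∞ f(x)`. -/
def singSubdiff (f : E n → EReal) (x : E n) : Set (E n) :=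
  {z | ∃ (xk zk : ℕ → E n) (lk : ℕ → ℝ),
      (∀ k, zk k ∈ proxSubdiff f (xk k)) ∧ (∀ k, 0 < lk k) ∧
      Tendsto xk atTop (𝓝 x) ∧
      Tendsto (fun k => f (xk k)) atTop (𝓝 (f x)) ∧
      Tendsto lk atTop (𝓝 0) ∧
      Tendsto (fun k => lk k • zk k) atTop (𝓝 z)}

/-- `f` is quadratically minorised (prox-bounded). -/
def QuadMinorized (f : E n → EReal) (xb : E n) : Prop :=
  ∃ α R : ℝ, 0 < R ∧ ∀ x, ((α - R / 2 * ‖x - xb‖ ^ 2 : ℝ) : EReal) ≤ f x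

/-- `f` is prox-regular at `xb` for `zb` with respect to `ε` and `r`. -/
def ProxRegularAt (f : E n → EReal) (xb zb : E n) (ε r : ℝ) : Prop :=
  0 < ε ∧ 0 ≤ r ∧ zb ∈ limSubdiff f xb ∧
  ∀ x z : E n, z ∈ limSubdiff f x → ‖x - xb‖ ≤ ε → ‖z - zb‖ ≤ ε →
    f x ≤ f xb + (ε : EReal) → f xb ≤ f x + (ε : EReal) →
    ∀ x' : E n, ‖x' - xb‖ ≤ ε →
      f x + ((⟪z, x' - x⟫ - r / 2 * ‖x' - x‖ ^ 2 : ℝ) : EReal) ≤ f x'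

/-- `f` is subdifferentially continuous at `xb` for `zb`. -/
def SubdiffContinuousAt (f : E n → EReal) (xb zb : E n) : Prop :=
  ∀ δ : ℝ, 0 < δ → ∃ ε : ℝ, 0 < ε ∧ ∀ x z : E n, z ∈ limSubdiff f x →
    ‖x - xb‖ ≤ ε → ‖z - zb‖ ≤ ε →
    f x ≤ f xb + (δ : EReal) ∧ f xb ≤ f x + (δ : EReal)

/-- The subjet `∂^{2,-} f(x)`: pairs `(∇φ(x), ∇²φ(x))` for `C²` functions `φ`
with `f - φ` having a local minimum at `x`. -/
def subjet (f : E n → EReal) (x : E n) : Set (E n × (E n →L[ℝ] E n)) :=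
  {p | ∃ φ : E n → ℝ, ContDiff ℝ 2 φ ∧
      IsLocalMin (fun y => f y - ((φ y : ℝ) : EReal)) x ∧
      p.1 = gradient φ x ∧ p.2 = fderiv ℝ (gradient φ) x}

/-- Pointwise subhessians `∂^{2,-} f(x,z)`. -/
def subhessian (f : E n → EReal) (x z : E n) : Set (E n →L[ℝ] E n) :=
  {Q | (z, Q) ∈ subjet f x}

/-- The limiting subjet `∂̲² f(x)`. -/
def limSubjet (f : E n → EReal) (x : E n) : Set (E n × (E n →L[ℝ] E n)) :=
  {p | ∃ (xk : ℕ → E n) (pk : ℕ → E n × (E n →L[ℝ] E n)),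
      (∀ k, pk k ∈ subjet f (xk k)) ∧
      Tendsto xk atTop (𝓝 x) ∧
      Tendsto (fun k => f (xk k)) atTop (𝓝 (f x)) ∧
      Tendsto pk atTop (𝓝 p)}

/-- The limiting subhessians `∂̲² f(x,z)`. -/
def limSubhessian (f : E n → EReal) (x z : E n) : Set (E n →L[ℝ] E n) :=
  {Q | (z, Q) ∈ limSubjet f x}

/-- The rank-one support `q(𝒜)(h) = sup {⟨Q h, h⟩ : Q ∈ 𝒜}`. -/
def q1 (A : Set (E n →L[ℝ] E n)) (h : E n) : EReal :=
  ⨆ Q ∈ A, ((⟪Q h, h⟫ : ℝ) : EReal)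

/-- The rank-one barrier cone `b¹(𝒜) = dom q(𝒜)`. -/
def b1 (A : Set (E n →L[ℝ] E n)) : Set (E n) :=
  {h | q1 A h < ⊤}

/-- Support function `δ*_C`. -/
def suppFn (C : Set (E n)) (u : E n) : EReal :=
  ⨆ z ∈ C, ((⟪z, u⟫ : ℝ) : EReal)

/-- The set of minimisers of the tilted function `f - ⟨·, z⟩` over the closed
`ε`-ball around `xb`. -/
def tiltArgmin (f : E n → EReal) (xb : E n) (ε : ℝ) (z : E n) : Set (E n) :=
  {x | ‖x - xb‖ ≤ ε ∧ ∀ y : E n, ‖y - xb‖ ≤ ε →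
      f x - ((⟪x, z⟫ : ℝ) : EReal) ≤ f y - ((⟪y, z⟫ : ℝ) : EReal)}

/-- `xb` gives a tilt stable local minimum of `f` with radius `ε`. -/
def TiltStableWith (f : E n → EReal) (xb : E n) (ε : ℝ) : Prop :=
  0 < ε ∧ f xb ≠ ⊤ ∧ f xb ≠ ⊥ ∧
  ∃ (m : E n → E n) (δ : ℝ) (L : NNReal), 0 < δ ∧
    LipschitzOnWith L m (ball (0 : E n) δ) ∧ m 0 = xb ∧
    ∀ z ∈ ball (0 : E n) δ, tiltArgmin f xb ε z = {m z}

/-- `xb` gives a tilt stable local minimum of `f`. -/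
def TiltStable (f : E n → EReal) (xb : E n) : Prop :=
  ∃ ε : ℝ, TiltStableWith f xb ε

/-- Tilted argmin relative to a subspace `W`. -/
def tiltArgminOn (W : Submodule ℝ (E n)) (f : E n → EReal) (xb : E n) (ε : ℝ)
    (z : E n) : Set (E n) :=
  {x | x ∈ W ∧ ‖x - xb‖ ≤ ε ∧ ∀ y ∈ (W : Set (E n)), ‖y - xb‖ ≤ ε →
      f x - ((⟪x, z⟫ : ℝ) : EReal) ≤ f y - ((⟪y, z⟫ : ℝ) : EReal)}

/-- Tilt stable local minimum of a function considered on a subspace `W`. -/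
def TiltStableOnWith (W : Submodule ℝ (E n)) (f : E n → EReal) (xb : E n)
    (ε : ℝ) : Prop :=
  0 < ε ∧ f xb ≠ ⊤ ∧ f xb ≠ ⊥ ∧
  ∃ (m : E n → E n) (δ : ℝ) (L : NNReal), 0 < δ ∧
    LipschitzOnWith L m (ball (0 : E n) δ ∩ (W : Set (E n))) ∧ m 0 = xb ∧
    ∀ z ∈ ball (0 : E n) δ ∩ (W : Set (E n)), tiltArgminOn W f xb ε z = {m z}

def TiltStableOn (W : Submodule ℝ (E n)) (f : E n → EReal) (xb : E n) : Prop :=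
  ∃ ε : ℝ, TiltStableOnWith W f xb ε

/-- Epigraph with real heights. -/
def epiR (h : E n → EReal) : Set (E n × ℝ) :=
  {p | h p.1 ≤ (p.2 : EReal)}

/-- Lower semicontinuous convex hull `co h`: its epigraph is the closed convex
hull of the epigraph of `h`. -/
def coHull (h : E n → EReal) : E n → EReal :=
  fun w => sInf ((fun c : ℝ => (c : EReal)) ''
    {c : ℝ | (w, c) ∈ closure (convexHull ℝ (epiR h))})

/-- Convex (Fenchel) conjugate. -/
def conj (g : E n → EReal) (z : E n) : EReal :=
  ⨆ x : E n, ((⟪z, x⟫ : ℝ) : EReal) - g x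

/-- Convex conjugate with respect to a subspace `W`. -/
def conjOn (W : Submodule ℝ (E n)) (g : E n → EReal) (z : E n) : EReal :=
  ⨆ x : W, ((⟪z, (x : E n)⟫ : ℝ) : EReal) - g (x : E n)

/-- The subdifferential of convex analysis `∂_co g(u)`. -/
def convexSubdiff (g : E n → EReal) (u : E n) : Set (E n) :=
  {z | ∀ u' : E n, g u + ((⟪z, u' - u⟫ : ℝ) : EReal) ≤ g u'}

/-- The convex subdifferential relative to a subspace `W`. -/
def convexSubdiffOn (W : Submodule ℝ (E n)) (g : E n → EReal) (u : E n) :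
    Set (E n) :=
  {z | z ∈ W ∧ ∀ u' ∈ (W : Set (E n)), g u + ((⟪z, u' - u⟫ : ℝ) : EReal) ≤ g u'}

/-- Orthogonal projection onto `W` as a map `E n →L[ℝ] E n`. -/
def projE (W : Submodule ℝ (E n)) : E n →L[ℝ] E n :=
  W.subtypeL.comp (Submodule.orthogonalProjectionOnto W)

/-- Fréchet (regular) normals to a subset of a product. -/
def frechetNormal2 (S : Set (E n × E n)) (p : E n × E n) : Set (E n × E n) :=
  {v | ∀ ε : ℝ, 0 < ε → ∃ δ : ℝ, 0 < δ ∧ ∀ q ∈ S,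
      ‖q.1 - p.1‖ < δ → ‖q.2 - p.2‖ < δ →
      ⟪v.1, q.1 - p.1⟫ + ⟪v.2, q.2 - p.2⟫ ≤ ε * (‖q.1 - p.1‖ + ‖q.2 - p.2‖)}

/-- Limiting (Mordukhovich) normals to a subset of a product. -/
def limNormal2 (S : Set (E n × E n)) (p : E n × E n) : Set (E n × E n) :=
  {v | ∃ pk vk : ℕ → E n × E n,
      (∀ k, pk k ∈ S ∧ vk k ∈ frechetNormal2 S (pk k)) ∧
      Tendsto pk atTop (𝓝 p) ∧ Tendsto vk atTop (𝓝 v)}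

/-- The Mordukhovich coderivative `D* F(x,y)(w)` of a set-valued map. -/
def coderiv (F : E n → Set (E n)) (x y w : E n) : Set (E n) :=
  {p | (p, -w) ∈ limNormal2 {q : E n × E n | q.2 ∈ F q.1} (x, y)}

/-- Limiting Hessians `D̄² f(x,z)` of a real-valued function. -/
def limHessians (f : E n → ℝ) (x z : E n) : Set (E n →L[ℝ] E n) :=
  {Q | ∃ xk : ℕ → E n,
      (∀ k, DifferentiableAt ℝ (gradient f) (xk k)) ∧
      Tendsto xk atTop (𝓝 x) ∧
      Tendsto (fun k => f (xk k)) atTop (𝓝 (f x)) ∧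
      Tendsto (fun k => gradient f (xk k)) atTop (𝓝 z) ∧
      Tendsto (fun k => fderiv ℝ (gradient f) (xk k)) atTop (𝓝 Q)}

/-- `f` is `C^{1,1}` near `x`: differentiable with locally Lipschitz gradient. -/
def C11Near (f : E n → ℝ) (x : E n) : Prop :=
  ∃ δ : ℝ, 0 < δ ∧ (∀ y ∈ ball x δ, DifferentiableAt ℝ f y) ∧
    ∃ L : NNReal, LipschitzOnWith L (gradient f) (ball x δ)

/-- Second-order difference quotient `Δ₂`. -/
def delta2 (g : E n → EReal) (x : E n) (t : ℝ) (z u : E n) : EReal :=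
  ((2 / t ^ 2 : ℝ) : EReal) *
    (g (x + t • u) - g x - ((t * ⟪z, u⟫ : ℝ) : EReal))

/-- Lower second-order Dini directional derivative `g″₋(x, z, h)`. -/
def dini2 (g : E n → EReal) (x z h : E n) : EReal :=
  liminf (fun p : ℝ × E n => delta2 g x p.1 z p.2) ((𝓝[>] (0 : ℝ)) ×ˢ 𝓝 h)

/-- Convexity for extended-real-valued functions. -/
def ERealConvexFn (g : E n → EReal) : Prop :=
  ∀ x y : E n, ∀ a b : ℝ, 0 ≤ a → 0 ≤ b → a + b = 1 →
    g (a • x + b • y) ≤ (a : EReal) * g x + (b : EReal) * g y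

/-- Indicator of the box `B_ε^{U'}(0) ⊕ B_ε^{U'^⊥}(0)`. -/
def boxInd (U' : Submodule ℝ (E n)) (ε : ℝ) (w : E n) : EReal :=
  if ‖projE U' w‖ ≤ ε ∧ ‖projE U'ᗮ w‖ ≤ ε then 0 else ⊤

/-- The localised auxiliary function `h(w) := f(xb+w) + δ_{B_ε^{U'}(0) ⊕ B_ε^{V'}(0)}(w)`. -/
def hFn (f : E n → EReal) (xb : E n) (U' : Submodule ℝ (E n)) (ε : ℝ)
    (w : E n) : EReal :=
  f (xb + w) + boxInd U' ε w

/-- The localised `U'`-Lagrangian `L^ε_{U'}`. -/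
def Lloc (f : E n → EReal) (xb : E n) (U' : Submodule ℝ (E n)) (ε : ℝ)
    (zbV : E n) : E n → EReal := fun u =>
  if u ∈ U' ∧ ‖u‖ ≤ ε then
    sInf ((fun v' : E n => f (xb + u + v') - ((⟪zbV, v'⟫ : ℝ) : EReal)) ''
      {v' : E n | v' ∈ U'ᗮ ∧ ‖v'‖ ≤ ε})
  else ⊤

/-- The auxiliary function `k_v(u) := h(u+v(u)) - ⟨zb_{V'}, u+v(u)⟩`. -/
def kFn (f : E n → EReal) (xb : E n) (U' : Submodule ℝ (E n)) (ε : ℝ)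
    (zbV : E n) (v : E n → E n) : E n → EReal := fun u =>
  hFn f xb U' ε (u + v u) - ((⟪zbV, u + v u⟫ : ℝ) : EReal)

/-- `w` is a minimiser of `v' ↦ f(xb+u+v') - ⟨zbV, v'⟩` over `V' ∩ B_ε(0)`. -/
def IsVSel (f : E n → EReal) (xb : E n) (V' : Submodule ℝ (E n)) (ε : ℝ)
    (zbV : E n) (u w : E n) : Prop :=
  w ∈ V' ∧ ‖w‖ ≤ ε ∧ ∀ w' ∈ (V' : Set (E n)), ‖w'‖ ≤ ε →
    f (xb + u + w) - ((⟪zbV, w⟫ : ℝ) : EReal) ≤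
      f (xb + u + w') - ((⟪zbV, w'⟫ : ℝ) : EReal)

/-- Global argmin set of the tilted function `g - ⟨·, z⟩` (the map `m_h`). -/
def msetArg (g : E n → EReal) (z : E n) : Set (E n) :=
  {w | ∀ w' : E n, g w - ((⟪w, z⟫ : ℝ) : EReal) ≤ g w' - ((⟪w', z⟫ : ℝ) : EReal)}


theorem aux_nbhd {C : Set (E n)} {zb : E n} (hzb : zb ∈ C)
    (hrel : zb ∈ intrinsicInterior ℝ C) :
    ∃ ρ : ℝ, 0 < ρ ∧ ∀ w ∈ Submodule.span ℝ ((fun z => z - zb) '' C),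
      ‖w‖ < ρ → zb + w ∈ C := by
  obtain ⟨y, hy, hyx⟩ := hrel
  rw [mem_interior_iff_mem_nhds, Metric.mem_nhds_iff] at hy
  obtain ⟨ρ, hρ, hball⟩ := hy
  refine ⟨ρ, hρ, fun w hw hwρ => ?_⟩
  have hspan : Submodule.span ℝ ((fun z => z - zb) '' C) ≤ vectorSpan ℝ C := by
    rw [Submodule.span_le]
    rintro _ ⟨z, hz, rfl⟩
    exact vsub_mem_vectorSpan ℝ hz hzb
  have hmem : zb + w ∈ affineSpan ℝ C := by
    have : w ∈ (affineSpan ℝ C).direction := by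
      rw [direction_affineSpan]; exact hspan hw
    have := AffineSubspace.vadd_mem_of_mem_direction this
      (mem_affineSpan ℝ hzb)
    simpa [add_comm] using this
  have : (⟨zb + w, hmem⟩ : affineSpan ℝ C) ∈ Metric.ball y ρ := by
    rw [Metric.mem_ball, Subtype.dist_eq, hyx]
    simpa [dist_eq_norm] using hwρ
  exact hball this
theorem aux_growth (f : E n → EReal) (xb zb : E n)
    (ε r : ℝ) (hpr : ProxRegularAt f xb zb ε r)
    (V : Submodule ℝ (E n))
    (hρex : ∃ ρ : ℝ, 0 < ρ ∧ ∀ w ∈ V, ‖w‖ < ρ → zb + w ∈ limSubdiff f xb) :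
    ∃ ε' : ℝ, 0 < ε' ∧ ∀ β : ℝ, 0 ≤ β → ∃ εβ : ℝ, 0 < εβ ∧
      ∀ u ∈ (Vᗮ : Set (E n)), ∀ v ∈ (V : Set (E n)), ‖u‖ ≤ ε' → ‖v‖ ≤ εβ →
        f xb + ((⟪zb, u + v⟫ + β / 2 * ‖v‖ ^ 2 - r / 2 * ‖u‖ ^ 2 : ℝ) : EReal) ≤
          f (xb + u + v) := by
  obtain ⟨ρ, hρ, hmem⟩ := hρex
  obtain ⟨hε, hr, hzbC, hkey⟩ := hpr
  set s : ℝ := min (ρ / 2) ε with hs_def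
  have hs : 0 < s := lt_min (by linarith) hε
  refine ⟨ε / 2, by linarith, fun β hβ => ?_⟩
  refine ⟨min (ε / 2) (2 * s / (β + r + 1)), lt_min (by linarith)
    (by positivity), fun u hu v hv hun hvn => ?_⟩
  have hvn1 : ‖v‖ ≤ ε / 2 := hvn.trans (min_le_left _ _)
  have hvn2 : ‖v‖ ≤ 2 * s / (β + r + 1) := hvn.trans (min_le_right _ _)
  set z : E n := zb + (s / ‖v‖) • v with hz_def
  have hzsub : ‖z - zb‖ ≤ s := by
    rcases eq_or_ne v 0 with rfl | hv0
    · simp [hz_def, hs.le]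
    · have hv0' : (0:ℝ) < ‖v‖ := norm_pos_iff.2 hv0
      have : ‖z - zb‖ = s := by
        simp only [hz_def, add_sub_cancel_left, norm_smul, Real.norm_eq_abs,
          abs_of_nonneg (by positivity : (0:ℝ) ≤ s / ‖v‖)]
        field_simp
      linarith [this]
  have hzC : z ∈ limSubdiff f xb := by
    rcases eq_or_ne v 0 with rfl | hv0
    · simpa [hz_def] using hzbC
    · refine hmem _ (Submodule.smul_mem _ _ hv) ?_
      have hv0' : (0:ℝ) < ‖v‖ := norm_pos_iff.2 hv0
      have : ‖(s / ‖v‖) • v‖ = s := by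
        simp only [norm_smul, Real.norm_eq_abs,
          abs_of_nonneg (by positivity : (0:ℝ) ≤ s / ‖v‖)]
        field_simp
      rw [this]
      have : s ≤ ρ / 2 := min_le_left _ _
      linarith
  have hself : ∀ a : EReal, a ≤ a + (ε : EReal) := fun a =>
    le_add_of_nonneg_right (by exact_mod_cast hε.le)
  have happ := hkey xb z hzC (by simp [hε.le]) (hzsub.trans (min_le_right _ _))
    (hself _) (hself _) (xb + u + v)
    (by
      have : xb + u + v - xb = u + v := by abel
      rw [this]
      calc ‖u + v‖ ≤ ‖u‖ + ‖v‖ := norm_add_le _ _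
        _ ≤ ε := by linarith)
  have hsub : xb + u + v - xb = u + v := by abel
  rw [hsub] at happ
  refine le_trans ?_ happ
  refine add_le_add_right (EReal.coe_le_coe_iff.2 ?_) _
  have hvu : ⟪v, u⟫ = 0 := (Submodule.mem_orthogonal V u).1 hu v hv
  have huv : ⟪u, v⟫ = 0 := by rw [real_inner_comm]; exact hvu
  have hnorm : ‖u + v‖ ^ 2 = ‖u‖ ^ 2 + ‖v‖ ^ 2 := by
    rw [norm_add_sq_real, huv]; ring
  have hinner : ⟪z, u + v⟫ = ⟪zb, u + v⟫ + s / ‖v‖ * ‖v‖ ^ 2 := by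
    simp only [hz_def, inner_add_left, real_inner_smul_left, inner_add_right, hvu,
      real_inner_self_eq_norm_sq]
    ring
  have hsv : s / ‖v‖ * ‖v‖ ^ 2 = s * ‖v‖ := by
    rcases eq_or_ne v 0 with rfl | hv0
    · simp
    · have hv0' : (0:ℝ) < ‖v‖ := norm_pos_iff.2 hv0
      field_simp
  rw [hinner, hsv, hnorm]
  have hvsq : (β + r) / 2 * ‖v‖ ^ 2 ≤ s * ‖v‖ := by
    have h1 : ‖v‖ * (β + r + 1) ≤ 2 * s := (le_div_iff₀ (by positivity)).1 hvn2
    nlinarith [norm_nonneg v]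
  nlinarith
theorem aux_U_eq (C : Set (E n)) (zb : E n) (hzb : zb ∈ C)
    (V : Submodule ℝ (E n)) (hV : V = Submodule.span ℝ ((fun z => z - zb) '' C)) :
    ((Vᗮ : Submodule ℝ (E n)) : Set (E n)) =
      {h : E n | -(suppFn C (-h)) = suppFn C h ∧
        suppFn C h = ((⟪zb, h⟫ : ℝ) : EReal)} := by
  have hsupp : ∀ h : E n, (∀ z ∈ C, ⟪z, h⟫ = ⟪zb, h⟫) →
      suppFn C h = ((⟪zb, h⟫ : ℝ) : EReal) := by
    intro h hc
    apply le_antisymm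
    · exact iSup₂_le fun z hz => by rw [hc z hz]
    · exact le_iSup₂_of_le zb hzb (le_refl _)
  ext h
  simp only [SetLike.mem_coe, mem_setOf_eq]
  constructor
  · intro hh
    have hc : ∀ z ∈ C, ⟪z, h⟫ = ⟪zb, h⟫ := by
      intro z hz
      have hzV : z - zb ∈ V := by
        rw [hV]; exact Submodule.subset_span ⟨z, hz, rfl⟩
      have := (Submodule.mem_orthogonal V h).1 hh _ hzV
      rw [inner_sub_left] at this
      linarith
    have hc' : ∀ z ∈ C, ⟪z, -h⟫ = ⟪zb, -h⟫ := by
      intro z hz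
      simp only [inner_neg_right, hc z hz]
    rw [hsupp h hc, hsupp (-h) hc']
    refine ⟨?_, rfl⟩
    rw [inner_neg_right, EReal.coe_neg, neg_neg]
  · rintro ⟨h1, h2⟩
    have h3 : suppFn C (-h) = ((⟪zb, -h⟫ : ℝ) : EReal) := by
      have h1' := congrArg Neg.neg h1
      rw [neg_neg] at h1'
      rw [h1', h2, inner_neg_right, ← EReal.coe_neg]
    have hub : ∀ z ∈ C, ⟪z, h⟫ = ⟪zb, h⟫ := by
      intro z hz
      have l1 : ((⟪z, h⟫ : ℝ) : EReal) ≤ ((⟪zb, h⟫ : ℝ) : EReal) := by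
        rw [← h2]; exact le_iSup₂_of_le z hz (le_refl _)
      have l2 : ((⟪z, -h⟫ : ℝ) : EReal) ≤ ((⟪zb, -h⟫ : ℝ) : EReal) := by
        rw [← h3]; exact le_iSup₂_of_le z hz (le_refl _)
      rw [EReal.coe_le_coe_iff] at l1 l2
      simp only [inner_neg_right] at l2
      linarith
    rw [hV, Submodule.mem_orthogonal]
    intro w hw
    induction hw using Submodule.span_induction with
    | mem w hw =>
        obtain ⟨z, hz, rfl⟩ := hw
        rw [inner_sub_left, hub z hz]; ring
    | zero => simp
    | add a b _ _ ha hb => rw [inner_add_left, ha, hb]; ring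
    | smul c a _ ha => rw [real_inner_smul_left, ha]; ring
theorem aux_proj_inner (W : Submodule ℝ (E n)) (w : E n) :
    ⟪projE W w, w⟫ = ‖projE W w‖ ^ 2 := by
  have h1 : ⟪projE W w, w - projE W w⟫ = 0 := by
    rw [real_inner_comm]
    exact Submodule.starProjection_inner_eq_zero w _ (Submodule.orthogonalProjectionOnto W w).2
  have h2 : ⟪projE W w, w⟫ = ⟪projE W w, projE W w⟫ + ⟪projE W w, w - projE W w⟫ := by
    rw [← inner_add_right]
    congr 1
    abel
  rw [h2, h1, real_inner_self_eq_norm_sq]; ring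

theorem aux_hasGradient (A : E n →L[ℝ] E n)
    (hA : ∀ a b : E n, ⟪A a, b⟫ = ⟪a, A b⟫) (x0 z0 : E n) (c : ℝ) (y : E n) :
    HasGradientAt (fun w => c + ⟪z0, w - x0⟫ + ⟪A (w - x0), w - x0⟫)
      (z0 + (2:ℝ) • A (y - x0)) y := by
  rw [hasGradientAt_iff_hasFDerivAt]
  have h1 : HasFDerivAt (fun w : E n => w - x0) (ContinuousLinearMap.id ℝ (E n)) y :=
    (hasFDerivAt_id y).sub_const x0
  have h2 : HasFDerivAt (fun w : E n => A (w - x0)) A y := by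
    have := (A.hasFDerivAt (x := y - x0)).comp y h1
    exact this
  have h3 := (h2.inner ℝ h1)
  have h4 : HasFDerivAt (fun w : E n => ⟪z0, w - x0⟫)
      ((fderivInnerCLM ℝ ((z0 : E n), y - x0)).comp
        ((0 : E n →L[ℝ] E n).prod (ContinuousLinearMap.id ℝ (E n)))) y := by
    have h0 : HasFDerivAt (fun _ : E n => z0) (0 : E n →L[ℝ] E n) y :=
      hasFDerivAt_const z0 y
    exact h0.inner ℝ h1
  have h5 := ((hasFDerivAt_const c y).add h4).add h3
  refine h5.congr_fderiv ?_
  apply ContinuousLinearMap.ext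
  intro w
  simp only [InnerProductSpace.toDual_apply_apply, ContinuousLinearMap.add_apply,
    ContinuousLinearMap.comp_apply, ContinuousLinearMap.prod_apply,
    ContinuousLinearMap.zero_apply, ContinuousLinearMap.coe_id', id_eq,
    fderivInnerCLM_apply, ContinuousLinearMap.coe_zero, Pi.zero_apply]
  have hswap : ⟪A w, y - x0⟫ = ⟪A (y - x0), w⟫ := by
    rw [hA w (y - x0), real_inner_comm]
  rw [inner_add_left, real_inner_smul_left, hswap]
  simp only [inner_zero_left]
  ring
theorem aux_sub_nonneg {a : EReal} {b : ℝ} (hab : (b : EReal) ≤ a) :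
    (0 : EReal) ≤ a - (b : EReal) := by
  induction a using EReal.rec with
  | bot => simp at hab
  | coe x =>
      rw [← EReal.coe_sub]
      have : b ≤ x := EReal.coe_le_coe_iff.1 hab
      exact_mod_cast sub_nonneg.2 this
  | top => rw [EReal.top_sub_coe]; exact le_top

theorem projE_symm (W : Submodule ℝ (E n)) (a b : E n) :
    ⟪projE W a, b⟫ = ⟪a, projE W b⟫ :=
  Submodule.inner_starProjection_left_eq_right (K := W) a b

theorem aux_b1 (f : E n → EReal) (xb zb : E n) (r : ℝ)
    (hbot : f xb ≠ ⊥)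
    (V : Submodule ℝ (E n))
    (hgrow : ∀ β : ℝ, 0 ≤ β → ∀ᶠ y in 𝓝 xb,
      f xb + ((⟪zb, y - xb⟫ + β / 2 * ‖projE V (y - xb)‖ ^ 2
        - r / 2 * ‖projE Vᗮ (y - xb)‖ ^ 2 : ℝ) : EReal) ≤ f y) :
    b1 (limSubhessian f xb zb) ⊆ ((Vᗮ : Submodule ℝ (E n)) : Set (E n)) := by
  intro h hh
  by_contra hhU
  have hdec : projE V h + projE Vᗮ h = h :=
    Submodule.starProjection_add_starProjection_orthogonal (K := V) h
  have hv0 : projE V h ≠ 0 := by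
    intro h0
    apply hhU
    have hh' : h = projE Vᗮ h := by
      conv_lhs => rw [← hdec, h0, zero_add]
    rw [SetLike.mem_coe, hh']
    exact (Submodule.orthogonalProjectionOnto Vᗮ h).2
  set v0 : ℝ := ‖projE V h‖ with hv0def
  have hv0pos : 0 < v0 := norm_pos_iff.2 hv0
  set u0 : ℝ := ‖projE Vᗮ h‖ with hu0def
  have hkey : ∀ β : ℝ, 0 ≤ β →
      (β • projE V - r • projE Vᗮ) ∈ limSubhessian f xb zb := by
    intro β hβ
    set A : E n →L[ℝ] E n := (β/2) • projE V - (r/2) • projE Vᗮ with hAdef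
    have hAsym : ∀ a b : E n, ⟪A a, b⟫ = ⟪a, A b⟫ := by
      intro a b
      simp only [hAdef, ContinuousLinearMap.sub_apply, ContinuousLinearMap.smul_apply,
        inner_sub_left, inner_sub_right, real_inner_smul_left, real_inner_smul_right]
      rw [projE_symm V a b, projE_symm Vᗮ a b]
    have hAval : ∀ w : E n, ⟪A w, w⟫ =
        β / 2 * ‖projE V w‖ ^ 2 - r / 2 * ‖projE Vᗮ w‖ ^ 2 := by
      intro w
      simp only [hAdef, ContinuousLinearMap.sub_apply, ContinuousLinearMap.smul_apply,
        inner_sub_left, real_inner_smul_left]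
      rw [aux_proj_inner V w, aux_proj_inner Vᗮ w]
    set c : ℝ := (f xb).toReal with hcdef
    set φ : E n → ℝ := fun w => c + ⟪zb, w - xb⟫ + ⟪A (w - xb), w - xb⟫ with hφdef
    have hgradAt : ∀ y, HasGradientAt φ (zb + (2:ℝ) • A (y - xb)) y :=
      fun y => aux_hasGradient A hAsym xb zb c y
    have hgradfun : gradient φ = fun y => zb + ((2:ℝ) • A) (y - xb) := by
      funext y
      rw [(hgradAt y).gradient]
      simp
    have hgrad_xb : gradient φ xb = zb := by rw [hgradfun]; simp
    have hfderiv : fderiv ℝ (gradient φ) xb = β • projE V - r • projE Vᗮ := by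
      rw [hgradfun]
      have hAeq : (2:ℝ) • A = β • projE V - r • projE Vᗮ := by
        rw [hAdef, smul_sub, smul_smul, smul_smul]
        norm_num
        congr 1 <;> ring_nf
      have h1 : HasFDerivAt (fun y : E n => y - xb) (ContinuousLinearMap.id ℝ (E n)) xb :=
        (hasFDerivAt_id xb).sub_const xb
      have h2 : HasFDerivAt (fun y : E n => ((2:ℝ) • A) (y - xb)) ((2:ℝ) • A) xb := by
        have hfun : (fun y : E n => ((2:ℝ) • A) (y - xb))
            = fun y : E n => ((2:ℝ) • A) y - ((2:ℝ) • A) xb := by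
          funext y; rw [map_sub]
        rw [hfun]
        exact (((2:ℝ) • A).hasFDerivAt).sub_const _
      rw [(h2.const_add zb).fderiv, hAeq]
    have hcd : ContDiff ℝ 2 φ := by
      refine ContDiff.add (ContDiff.add contDiff_const ?_) ?_
      · exact ContDiff.inner ℝ contDiff_const (contDiff_id.sub contDiff_const)
      · exact ContDiff.inner ℝ ((A.contDiff).comp (contDiff_id.sub contDiff_const))
          (contDiff_id.sub contDiff_const)
    have hφxb : φ xb = c := by simp [hφdef]
    have hmin : IsLocalMin (fun y => f y - ((φ y : ℝ) : EReal)) xb := by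
      refine ((hgrow β hβ).mono fun y hy => ?_)
      rcases eq_or_ne (f xb) ⊤ with htop | htop
      · have hfy : f y = ⊤ := by
          rw [htop, EReal.top_add_coe] at hy
          exact top_le_iff.1 hy
        show f xb - ((φ xb : ℝ) : EReal) ≤ f y - ((φ y : ℝ) : EReal)
        rw [hfy, EReal.top_sub_coe]
        exact le_top
      · have hfxb : f xb = ((c : ℝ) : EReal) := (EReal.coe_toReal htop hbot).symm
        show f xb - ((φ xb : ℝ) : EReal) ≤ f y - ((φ y : ℝ) : EReal)
        rw [hφxb, hfxb, ← EReal.coe_sub, sub_self]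
        have hφy : (φ y : EReal) ≤ f y := by
          have : φ y = c + (⟪zb, y - xb⟫ + β / 2 * ‖projE V (y - xb)‖ ^ 2
              - r / 2 * ‖projE Vᗮ (y - xb)‖ ^ 2) := by
            rw [hφdef]; simp only []
            rw [hAval (y - xb)]; ring
          rw [this, EReal.coe_add]
          rw [hfxb] at hy
          exact hy
        exact aux_sub_nonneg hφy
    have hsubjet : (zb, β • projE V - r • projE Vᗮ) ∈ subjet f xb :=
      ⟨φ, hcd, hmin, hgrad_xb.symm, hfderiv.symm⟩
    exact ⟨fun _ => xb, fun _ => (zb, β • projE V - r • projE Vᗮ),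
      fun _ => hsubjet, tendsto_const_nhds, tendsto_const_nhds, tendsto_const_nhds⟩
  have hval : ∀ β : ℝ, 0 ≤ β →
      ((β * v0 ^ 2 - r * u0 ^ 2 : ℝ) : EReal) ≤ q1 (limSubhessian f xb zb) h := by
    intro β hβ
    refine le_trans (le_of_eq ?_) (le_iSup₂_of_le _ (hkey β hβ) (le_refl _))
    congr 1
    simp only [ContinuousLinearMap.sub_apply, ContinuousLinearMap.smul_apply,
      inner_sub_left, real_inner_smul_left]
    rw [aux_proj_inner V h, aux_proj_inner Vᗮ h]
  obtain ⟨M, hM1, -⟩ := EReal.lt_iff_exists_real_btwn.1 hh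
  set β : ℝ := max 0 ((M + r * u0 ^ 2 + 1) / v0 ^ 2) with hβdef
  have hβ0 : 0 ≤ β := le_max_left _ _
  have hβ1 : (M + r * u0 ^ 2 + 1) / v0 ^ 2 ≤ β := le_max_right _ _
  have hβ2 : M + r * u0 ^ 2 + 1 ≤ β * v0 ^ 2 := by
    rw [div_le_iff₀ (by positivity)] at hβ1
    linarith
  have hlt : (M : EReal) < ((β * v0 ^ 2 - r * u0 ^ 2 : ℝ) : EReal) := by
    rw [EReal.coe_lt_coe_iff]
    linarith
  exact absurd (lt_of_lt_of_le hlt (hval β hβ0)) (not_lt.2 hM1.le)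
theorem projE_norm_le (W : Submodule ℝ (E n)) (w : E n) : ‖projE W w‖ ≤ ‖w‖ := by
  have h1 : ‖projE W w‖ = ‖Submodule.orthogonalProjectionOnto W w‖ := rfl
  rw [h1]
  calc ‖Submodule.orthogonalProjectionOnto W w‖ ≤ ‖Submodule.orthogonalProjectionOnto W‖ * ‖w‖ :=
        (Submodule.orthogonalProjectionOnto W).le_opNorm w
    _ ≤ 1 * ‖w‖ := by
        apply mul_le_mul_of_nonneg_right (Submodule.orthogonalProjectionOnto_norm_le _) (norm_nonneg _)
    _ = ‖w‖ := one_mul _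
/-- Lemma `lem:sharp`: the quadratic growth estimate in the
`V`-directions and the inclusion `U² ⊆ U`. -/
theorem statement6
    (f : E n → EReal) (xb zb : E n)
    (hproper : ProperFn f) (hlsc : LowerSemicontinuous f)
    (hquad : QuadMinorized f xb)
    (ε r : ℝ) (hpr : ProxRegularAt f xb zb ε r)
    (hrel : zb ∈ intrinsicInterior ℝ (limSubdiff f xb))
    (V U : Submodule ℝ (E n))
    (hV : V = Submodule.span ℝ ((fun z => z - zb) '' limSubdiff f xb))
    (hU : U = Vᗮ) :
    (∃ ε' : ℝ, 0 < ε' ∧ ∀ β : ℝ, 0 ≤ β → ∃ εβ : ℝ, 0 < εβ ∧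
      ∀ u ∈ (U : Set (E n)), ∀ v ∈ (V : Set (E n)), ‖u‖ ≤ ε' → ‖v‖ ≤ εβ →
        f xb + ((⟪zb, u + v⟫ + β / 2 * ‖v‖ ^ 2 - r / 2 * ‖u‖ ^ 2 : ℝ) : EReal) ≤
          f (xb + u + v)) ∧
    b1 (limSubhessian f xb zb) ⊆ (U : Set (E n)) ∧
    (U : Set (E n)) =
      {h : E n | -(suppFn (limSubdiff f xb) (-h)) = suppFn (limSubdiff f xb) h ∧
        suppFn (limSubdiff f xb) h = ((⟪zb, h⟫ : ℝ) : EReal)} := by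
  subst hU
  have hzbC : zb ∈ limSubdiff f xb := hpr.2.2.1
  have hρ := aux_nbhd hzbC hrel
  rw [← hV] at hρ
  obtain ⟨ε', hε', hgrow0⟩ := aux_growth f xb zb ε r hpr V hρ
  have hgrow : ∀ β : ℝ, 0 ≤ β → ∀ᶠ y in 𝓝 xb,
      f xb + ((⟪zb, y - xb⟫ + β / 2 * ‖projE V (y - xb)‖ ^ 2
        - r / 2 * ‖projE Vᗮ (y - xb)‖ ^ 2 : ℝ) : EReal) ≤ f y := by
    intro β hβ
    obtain ⟨εβ, hεβ, H⟩ := hgrow0 β hβ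
    have hδ : (0:ℝ) < min ε' εβ := lt_min hε' hεβ
    filter_upwards [Metric.ball_mem_nhds xb hδ] with y hy
    rw [Metric.mem_ball, dist_eq_norm] at hy
    set w : E n := y - xb with hwdef
    set u : E n := projE Vᗮ w with hudef
    set v : E n := projE V w with hvdef
    have hdec' : v + u = w :=
      Submodule.starProjection_add_starProjection_orthogonal (K := V) w
    have hun : ‖u‖ ≤ ε' :=
      le_trans (projE_norm_le _ _) (le_of_lt (lt_of_lt_of_le hy (min_le_left _ _)))
    have hvn : ‖v‖ ≤ εβ :=
      le_trans (projE_norm_le _ _) (le_of_lt (lt_of_lt_of_le hy (min_le_right _ _)))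
    have happ := H u (Submodule.orthogonalProjectionOnto Vᗮ w).2 v (Submodule.orthogonalProjectionOnto V w).2 hun hvn
    have huv : u + v = y - xb := by rw [add_comm]; exact hdec'
    have hxy : xb + u + v = y := by rw [add_assoc, huv]; abel
    rw [hxy, huv] at happ
    exact happ
  exact ⟨⟨ε', hε', hgrow0⟩, aux_b1 f xb zb r (hproper.1 xb) V hgrow,
    aux_U_eq (limSubdiff f xb) zb hzbC V hV⟩


end Paper
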